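/- arXiv:2207.05802 — 2 statements merged into one kernel-verified Lean document; each statement's English description precedes it below -/
import Mathlib

section
/- Let n, r be positive integers, λ > 0, Ω ⊆ {1,…,n}×{1,…,n}, M ∈ ℝ^{n×n}, and σ_max > 0. Let X, Y ∈ ℝ^{n×r} satisfy θ := ‖P_Ω(XYᵀ − M)‖_F > 0, ‖X‖ ≤ √(2σ_max) and ‖Y‖ ≤ √(2σ_max). Then ‖XᵀX − YᵀY‖_F ≤ (2√(2σ_max)/λ)·‖∇g(X,Y)‖_F. -/
open MeasureTheory ProbabilityTheory Matrix
open scoped ENNReal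

noncomputable section

/-- Frobenius norm of a real matrix. -/
def frobNorm {n m : ℕ} (A : Matrix (Fin n) (Fin m) ℝ) : ℝ :=
  Real.sqrt (∑ i, ∑ j, (A i j) ^ 2)

/-- Entrywise sup norm (largest absolute value of an entry). -/
def infNorm {n m : ℕ} (A : Matrix (Fin n) (Fin m) ℝ) : ℝ :=
  ⨆ i, ⨆ j, |A i j|

/-- Largest Euclidean norm of a row. -/
def row2InfNorm {n m : ℕ} (A : Matrix (Fin n) (Fin m) ℝ) : ℝ :=
  ⨆ i, Real.sqrt (∑ j, (A i j) ^ 2)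

/-- The (unsorted) singular values of a real matrix: square roots of the
eigenvalues of `Aᵀ * A`. -/
def singVal {n m : ℕ} (A : Matrix (Fin n) (Fin m) ℝ) : Fin m → ℝ :=
  fun j => Real.sqrt ((Matrix.isHermitian_conjTranspose_mul_self A).eigenvalues j)

/-- Spectral norm: the largest singular value. -/
def specNorm {n m : ℕ} (A : Matrix (Fin n) (Fin m) ℝ) : ℝ :=
  ⨆ j, singVal A j

/-- Nuclear norm: the sum of the singular values. -/
def nucNorm {n m : ℕ} (A : Matrix (Fin n) (Fin m) ℝ) : ℝ :=
  ∑ j, singVal A j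

open Classical in
/-- Projection onto the observed entries. -/
def POmega {n : ℕ} (S : Set (Fin n × Fin n)) (A : Matrix (Fin n) (Fin n) ℝ) :
    Matrix (Fin n) (Fin n) ℝ :=
  fun i j => if (i, j) ∈ S then A i j else 0

/-- Trace inner product of two real matrices. -/
def minner {n m : ℕ} (A B : Matrix (Fin n) (Fin m) ℝ) : ℝ :=
  ∑ i, ∑ j, A i j * B i j

/-- The square-root matrix completion objective. -/
def sqF {n : ℕ} (S : Set (Fin n × Fin n)) (M : Matrix (Fin n) (Fin n) ℝ) (lam : ℝ)
    (L : Matrix (Fin n) (Fin n) ℝ) : ℝ :=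
  frobNorm (POmega S (L - M)) + lam * nucNorm L

/-- `X`-gradient of the nonconvex objective `g`. -/
def gradX {n r : ℕ} (S : Set (Fin n × Fin n)) (M : Matrix (Fin n) (Fin n) ℝ) (lam : ℝ)
    (X Y : Matrix (Fin n) (Fin r) ℝ) : Matrix (Fin n) (Fin r) ℝ :=
  (frobNorm (POmega S (X * Yᵀ - M)))⁻¹ • (POmega S (X * Yᵀ - M) * Y) + lam • X

/-- `Y`-gradient of the nonconvex objective `g`. -/
def gradY {n r : ℕ} (S : Set (Fin n × Fin n)) (M : Matrix (Fin n) (Fin n) ℝ) (lam : ℝ)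
    (X Y : Matrix (Fin n) (Fin r) ℝ) : Matrix (Fin n) (Fin r) ℝ :=
  (frobNorm (POmega S (X * Yᵀ - M)))⁻¹ • ((POmega S (X * Yᵀ - M))ᵀ * X) + lam • Y

/-- Frobenius norm of the full gradient of `g`. -/
def gradNorm {n r : ℕ} (S : Set (Fin n × Fin n)) (M : Matrix (Fin n) (Fin n) ℝ) (lam : ℝ)
    (X Y : Matrix (Fin n) (Fin r) ℝ) : ℝ :=
  Real.sqrt ((frobNorm (gradX S M lam X Y)) ^ 2 + (frobNorm (gradY S M lam X Y)) ^ 2)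

/-- Orthogonal projection onto the tangent space `T = {U Aᵀ + B Vᵀ}` (for `U, V` with
orthonormal columns), with respect to the trace inner product. -/
def projT {n r : ℕ} (U V : Matrix (Fin n) (Fin r) ℝ) (A : Matrix (Fin n) (Fin n) ℝ) :
    Matrix (Fin n) (Fin n) ℝ :=
  U * Uᵀ * A + A * (V * Vᵀ) - U * Uᵀ * A * (V * Vᵀ)

/-- Orthogonal projection onto the orthogonal complement of the tangent space. -/
def projTperp {n r : ℕ} (U V : Matrix (Fin n) (Fin r) ℝ) (A : Matrix (Fin n) (Fin n) ℝ) :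
    Matrix (Fin n) (Fin n) ℝ :=
  A - projT U V A

open Classical in
/-- Indicator (as a real random variable) that an entry is observed. -/
def obsInd {n : ℕ} {Ω₀ : Type} (Obs : Ω₀ → Set (Fin n × Fin n)) (k : Fin n × Fin n)
    (ω : Ω₀) : ℝ :=
  if k ∈ Obs ω then 1 else 0

end

-- auxiliary lemmas to be inserted before the theorem
section Aux
open Matrix

lemma frob_nonneg {n m : ℕ} (A : Matrix (Fin n) (Fin m) ℝ) : 0 ≤ frobNorm A :=
  Real.sqrt_nonneg _

lemma frob_transpose {n m : ℕ} (A : Matrix (Fin n) (Fin m) ℝ) :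
    frobNorm Aᵀ = frobNorm A := by
  unfold frobNorm
  rw [Finset.sum_comm]
  rfl

lemma frob_eq_euclid {n m : ℕ} (C : Matrix (Fin n) (Fin m) ℝ) :
    frobNorm C = ‖(WithLp.equiv 2 ((Fin n × Fin m) → ℝ)).symm (fun p => C p.1 p.2)‖ := by
  rw [EuclideanSpace.norm_eq, frobNorm, Fintype.sum_prod_type]
  simp [sq_abs]

lemma frob_add_le {n m : ℕ} (A B : Matrix (Fin n) (Fin m) ℝ) :
    frobNorm (A + B) ≤ frobNorm A + frobNorm B := by
  rw [frob_eq_euclid, frob_eq_euclid, frob_eq_euclid]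
  have : (fun p : Fin n × Fin m => (A + B) p.1 p.2) =
      (fun p : Fin n × Fin m => A p.1 p.2) + (fun p => B p.1 p.2) := rfl
  rw [this, WithLp.equiv_symm_apply, WithLp.toLp_add]
  exact norm_add_le _ _

lemma frob_smul {n m : ℕ} (c : ℝ) (A : Matrix (Fin n) (Fin m) ℝ) :
    frobNorm (c • A) = |c| * frobNorm A := by
  unfold frobNorm
  rw [← Real.sqrt_sq_eq_abs, ← Real.sqrt_mul (sq_nonneg c)]
  congr 1
  simp [Matrix.smul_apply, mul_pow, Finset.mul_sum]

lemma specNorm_nonneg {n m : ℕ} (hm : 0 < m) (A : Matrix (Fin n) (Fin m) ℝ) :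
    0 ≤ specNorm A := by
  have : Nonempty (Fin m) := ⟨⟨0, hm⟩⟩
  refine le_trans (Real.sqrt_nonneg ((Matrix.isHermitian_conjTranspose_mul_self A).eigenvalues
    (Classical.arbitrary (Fin m)))) ?_
  exact le_ciSup (f := singVal A) (Set.Finite.bddAbove (Set.finite_range _))
    (Classical.arbitrary (Fin m))

lemma eig_le_sq {n m : ℕ} (hm : 0 < m) (A : Matrix (Fin n) (Fin m) ℝ) (j : Fin m) :
    (Matrix.isHermitian_conjTranspose_mul_self A).eigenvalues j ≤ specNorm A ^ 2 := by
  have : Nonempty (Fin m) := ⟨⟨0, hm⟩⟩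
  have h1 : singVal A j ≤ specNorm A :=
    le_ciSup (f := singVal A) (Set.Finite.bddAbove (Set.finite_range _)) j
  have h0 : 0 ≤ (Matrix.isHermitian_conjTranspose_mul_self A).eigenvalues j :=
    Matrix.eigenvalues_conjTranspose_mul_self_nonneg A j
  calc (Matrix.isHermitian_conjTranspose_mul_self A).eigenvalues j
      = singVal A j ^ 2 := (Real.sq_sqrt h0).symm
    _ ≤ specNorm A ^ 2 := pow_le_pow_left₀ (Real.sqrt_nonneg _) h1 2

lemma quad_le {n m : ℕ} (hm : 0 < m) (X : Matrix (Fin n) (Fin m) ℝ) (v : Fin m → ℝ) :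
    (X *ᵥ v) ⬝ᵥ (X *ᵥ v) ≤ specNorm X ^ 2 * (v ⬝ᵥ v) := by
  have hH := Matrix.isHermitian_conjTranspose_mul_self X
  set U : Matrix (Fin m) (Fin m) ℝ := (hH.eigenvectorUnitary : Matrix (Fin m) (Fin m) ℝ) with hU
  have hUU : U * star U = 1 := (Matrix.mem_unitaryGroup_iff).mp hH.eigenvectorUnitary.2
  have hvU : star U *ᵥ v = v ᵥ* U := by
    show (Uᴴ) *ᵥ v = v ᵥ* U
    rw [Matrix.conjTranspose_eq_transpose_of_trivial, Matrix.mulVec_transpose]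
  have hquad : (X *ᵥ v) ⬝ᵥ (X *ᵥ v) = v ⬝ᵥ ((Xᴴ * X) *ᵥ v) := by
    symm
    rw [Matrix.conjTranspose_eq_transpose_of_trivial, ← Matrix.mulVec_mulVec,
      Matrix.dotProduct_mulVec, Matrix.vecMul_transpose]
  have hspec : (Xᴴ * X) = U * Matrix.diagonal (RCLike.ofReal ∘ hH.eigenvalues) * star U :=
    hH.spectral_theorem
  have hwv : v ⬝ᵥ ((Xᴴ * X) *ᵥ v) = ∑ j, hH.eigenvalues j * ((v ᵥ* U) j)^2 := by
    conv_lhs => rw [hspec]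
    rw [← Matrix.mulVec_mulVec, ← Matrix.mulVec_mulVec, Matrix.dotProduct_mulVec, hvU,
      dotProduct]
    refine Finset.sum_congr rfl fun j _ => ?_
    rw [Matrix.mulVec_diagonal]
    simp [RCLike.ofReal_real_eq_id]
    ring
  have hww : (v ᵥ* U) ⬝ᵥ (v ᵥ* U) = v ⬝ᵥ v := by
    nth_rewrite 2 [← hvU]
    rw [← Matrix.dotProduct_mulVec, Matrix.mulVec_mulVec, hUU, Matrix.one_mulVec]
  rw [hquad, hwv, ← hww]
  have hd : (v ᵥ* U) ⬝ᵥ (v ᵥ* U) = ∑ j, ((v ᵥ* U) j)^2 := by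
    simp [dotProduct, sq]
  rw [hd, Finset.mul_sum]
  refine Finset.sum_le_sum fun j _ => ?_
  have h1 := eig_le_sq hm X j
  nlinarith [sq_nonneg ((v ᵥ* U) j), Matrix.eigenvalues_conjTranspose_mul_self_nonneg X j]

lemma key_vec {n m : ℕ} (hm : 0 < m) (X : Matrix (Fin n) (Fin m) ℝ) (a : Fin n → ℝ) :
    (Xᵀ *ᵥ a) ⬝ᵥ (Xᵀ *ᵥ a) ≤ specNorm X ^ 2 * (a ⬝ᵥ a) := by
  set w : Fin m → ℝ := Xᵀ *ᵥ a with hwdef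
  have ht0 : (0:ℝ) ≤ w ⬝ᵥ w := Finset.sum_nonneg fun i _ => mul_self_nonneg _
  have ha0 : (0:ℝ) ≤ a ⬝ᵥ a := Finset.sum_nonneg fun i _ => mul_self_nonneg _
  have h1 : w ⬝ᵥ w = a ⬝ᵥ (X *ᵥ w) := by
    nth_rewrite 1 [hwdef]
    rw [Matrix.mulVec_transpose, ← Matrix.dotProduct_mulVec]
  have hCS : (a ⬝ᵥ (X *ᵥ w)) ^ 2 ≤ (a ⬝ᵥ a) * ((X *ᵥ w) ⬝ᵥ (X *ᵥ w)) := by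
    have := Finset.sum_mul_sq_le_sq_mul_sq Finset.univ a (X *ᵥ w)
    calc (a ⬝ᵥ (X *ᵥ w)) ^ 2 = (∑ i, a i * (X *ᵥ w) i)^2 := rfl
      _ ≤ (∑ i, a i ^2) * (∑ i, (X *ᵥ w) i ^2) := this
      _ = (a ⬝ᵥ a) * ((X *ᵥ w) ⬝ᵥ (X *ᵥ w)) := by simp [dotProduct, sq]
  have h2 : (X *ᵥ w) ⬝ᵥ (X *ᵥ w) ≤ specNorm X ^ 2 * (w ⬝ᵥ w) := quad_le hm X w
  have hsq : (w ⬝ᵥ w)^2 ≤ (a ⬝ᵥ a) * (specNorm X ^2 * (w ⬝ᵥ w)) := by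
    rw [h1] at *
    nlinarith [ha0]
  rcases eq_or_lt_of_le ht0 with h | h
  · rw [← h]
    positivity
  · nlinarith [h]

lemma frob_mul_left {n m r : ℕ} (hr : 0 < r) (X : Matrix (Fin n) (Fin r) ℝ)
    (A : Matrix (Fin n) (Fin m) ℝ) :
    frobNorm (Xᵀ * A) ≤ specNorm X * frobNorm A := by
  have hs := specNorm_nonneg hr X
  have h1 : ∑ i, ∑ j, ((Xᵀ * A) i j)^2 ≤ specNorm X ^ 2 * ∑ i, ∑ j, (A i j)^2 := by
    calc ∑ i, ∑ j, ((Xᵀ * A) i j)^2 = ∑ j, ∑ i, ((Xᵀ * A) i j)^2 := Finset.sum_comm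
      _ = ∑ j, (Xᵀ *ᵥ (fun k => A k j)) ⬝ᵥ (Xᵀ *ᵥ (fun k => A k j)) := by
          refine Finset.sum_congr rfl fun j _ => ?_
          simp [dotProduct, Matrix.mul_apply, Matrix.mulVec, sq]
      _ ≤ ∑ j, specNorm X ^ 2 * ((fun k => A k j) ⬝ᵥ (fun k => A k j)) :=
          Finset.sum_le_sum fun j _ => key_vec hr X _
      _ = specNorm X ^ 2 * ∑ j, ∑ k, (A k j)^2 := by
          rw [← Finset.mul_sum]
          congr 1
          exact Finset.sum_congr rfl fun j _ => by simp [dotProduct, sq]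
      _ = specNorm X ^ 2 * ∑ i, ∑ j, (A i j)^2 := by rw [Finset.sum_comm]
  calc frobNorm (Xᵀ * A) ≤ Real.sqrt (specNorm X ^ 2 * ∑ i, ∑ j, (A i j)^2) :=
        Real.sqrt_le_sqrt h1
    _ = specNorm X * frobNorm A := by
        rw [Real.sqrt_mul (sq_nonneg _), Real.sqrt_sq hs]
        rfl

lemma frob_le_gradNorm_left {n r : ℕ} (S : Set (Fin n × Fin n)) (M : Matrix (Fin n) (Fin n) ℝ)
    (lam : ℝ) (X Y : Matrix (Fin n) (Fin r) ℝ) :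
    frobNorm (gradX S M lam X Y) ≤ gradNorm S M lam X Y := by
  rw [gradNorm, ← Real.sqrt_sq (frob_nonneg (gradX S M lam X Y))]
  exact Real.sqrt_le_sqrt (by rw [Real.sq_sqrt (sq_nonneg _)]; nlinarith [sq_nonneg (frobNorm (gradY S M lam X Y))])

lemma frob_le_gradNorm_right {n r : ℕ} (S : Set (Fin n × Fin n)) (M : Matrix (Fin n) (Fin n) ℝ)
    (lam : ℝ) (X Y : Matrix (Fin n) (Fin r) ℝ) :
    frobNorm (gradY S M lam X Y) ≤ gradNorm S M lam X Y := by
  rw [gradNorm, ← Real.sqrt_sq (frob_nonneg (gradY S M lam X Y))]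
  exact Real.sqrt_le_sqrt (by rw [Real.sq_sqrt (sq_nonneg _)]; nlinarith [sq_nonneg (frobNorm (gradX S M lam X Y))])

end Aux

/-- Near-balancedness of the factors at a point with small gradient:
`‖XᵀX − YᵀY‖_F ≤ (2√(2σmax)/λ) ‖∇g(X,Y)‖_F`. -/
theorem sqrtMC_factor_balance (n r : ℕ) (hn : 0 < n) (hr : 0 < r) (lam σmax : ℝ)
    (hlam : 0 < lam) (hσmax : 0 < σmax) (Ω : Set (Fin n × Fin n))
    (M : Matrix (Fin n) (Fin n) ℝ) (X Y : Matrix (Fin n) (Fin r) ℝ)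
    (hθ : 0 < frobNorm (POmega Ω (X * Yᵀ - M)))
    (hX : specNorm X ≤ Real.sqrt (2 * σmax)) (hY : specNorm Y ≤ Real.sqrt (2 * σmax)) :
    frobNorm (Xᵀ * X - Yᵀ * Y) ≤ 2 * Real.sqrt (2 * σmax) / lam * gradNorm Ω M lam X Y := by
  set gX := gradX Ω M lam X Y with hgX
  set gY := gradY Ω M lam X Y with hgY
  have hbal : Xᵀ * gX - gYᵀ * Y = lam • (Xᵀ * X - Yᵀ * Y) := by
    rw [hgX, hgY]
    unfold gradX gradY
    simp only [Matrix.transpose_add, Matrix.transpose_smul, Matrix.transpose_mul,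
      Matrix.transpose_transpose, Matrix.mul_add, Matrix.add_mul, Matrix.mul_smul,
      Matrix.smul_mul, smul_sub, Matrix.mul_assoc]
    abel
  have hrepr : Xᵀ * X - Yᵀ * Y = lam⁻¹ • (Xᵀ * gX - gYᵀ * Y) := by
    rw [hbal, smul_smul, inv_mul_cancel₀ (ne_of_gt hlam), one_smul]
  have hsub : frobNorm (Xᵀ * gX - gYᵀ * Y) ≤ frobNorm (Xᵀ * gX) + frobNorm (gYᵀ * Y) := by
    have : Xᵀ * gX - gYᵀ * Y = Xᵀ * gX + (-1 : ℝ) • (gYᵀ * Y) := by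
      rw [neg_one_smul]; abel
    rw [this]
    refine le_trans (frob_add_le _ _) ?_
    rw [frob_smul]
    simp
  have h1 : frobNorm (Xᵀ * gX) ≤ Real.sqrt (2 * σmax) * gradNorm Ω M lam X Y := by
    refine le_trans (frob_mul_left hr X gX) ?_
    exact mul_le_mul hX (frob_le_gradNorm_left Ω M lam X Y) (frob_nonneg _)
      (Real.sqrt_nonneg _)
  have h2 : frobNorm (gYᵀ * Y) ≤ Real.sqrt (2 * σmax) * gradNorm Ω M lam X Y := by
    have ht : frobNorm (gYᵀ * Y) = frobNorm (Yᵀ * gY) := by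
      rw [← frob_transpose (Yᵀ * gY), Matrix.transpose_mul, Matrix.transpose_transpose]
    rw [ht]
    refine le_trans (frob_mul_left hr Y gY) ?_
    exact mul_le_mul hY (frob_le_gradNorm_right Ω M lam X Y) (frob_nonneg _)
      (Real.sqrt_nonneg _)
  rw [hrepr, frob_smul, abs_of_pos (inv_pos.mpr hlam)]
  have hfinal : frobNorm (Xᵀ * gX - gYᵀ * Y) ≤
      2 * Real.sqrt (2 * σmax) * gradNorm Ω M lam X Y := by
    refine le_trans hsub ?_
    nlinarith [h1, h2]
  calc lam⁻¹ * frobNorm (Xᵀ * gX - gYᵀ * Y)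
      ≤ lam⁻¹ * (2 * Real.sqrt (2 * σmax) * gradNorm Ω M lam X Y) := by
        exact mul_le_mul_of_nonneg_left hfinal (le_of_lt (inv_pos.mpr hlam))
    _ = 2 * Real.sqrt (2 * σmax) / lam * gradNorm Ω M lam X Y := by
        field_simp
end

section
/- Let n, r be positive integers and Z ∈ ℝ^{n×n} a matrix of rank at most r. Then the nuclear norm of Z satisfies ‖Z‖_* = min{ (1/2)·(‖X‖_F² + ‖Y‖_F²) : X, Y ∈ ℝ^{n×r}, XYᵀ = Z }, and the minimum is attained. -/
open MeasureTheory ProbabilityTheory Matrix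
open scoped ENNReal

private lemma sum_dot' {n : ℕ} {ι : Type*} [Fintype ι] (f : ι → Fin n → ℝ) (x : Fin n → ℝ) :
    (∑ j, f j) ⬝ᵥ x = ∑ j, f j ⬝ᵥ x := by
  simp only [dotProduct, Finset.sum_apply, Finset.sum_mul]
  exact Finset.sum_comm

private lemma dot_sum' {n : ℕ} {ι : Type*} [Fintype ι] (f : ι → Fin n → ℝ) (x : Fin n → ℝ) :
    x ⬝ᵥ (∑ j, f j) = ∑ j, x ⬝ᵥ f j := by
  simp only [dotProduct, Finset.sum_apply, Finset.mul_sum]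
  exact Finset.sum_comm

private lemma dot_nonneg' {ι : Type*} [Fintype ι] (x : ι → ℝ) : 0 ≤ x ⬝ᵥ x :=
  Finset.sum_nonneg fun i _ => mul_self_nonneg _

private lemma bessel' {n : ℕ} {ι : Type*} [Fintype ι] [DecidableEq ι] (u : ι → Fin n → ℝ)
    (hd : ∀ i j, i ≠ j → u i ⬝ᵥ u j = 0) (hn : ∀ i, u i ⬝ᵥ u i ≤ 1) (x : Fin n → ℝ) :
    ∑ j, (u j ⬝ᵥ x) ^ 2 ≤ x ⬝ᵥ x := by
  set c : ι → ℝ := fun j => u j ⬝ᵥ x with hc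
  set s : Fin n → ℝ := ∑ j, c j • u j with hs
  have hxs : x ⬝ᵥ s = ∑ j, c j ^ 2 := by
    rw [hs, dot_sum']
    refine Finset.sum_congr rfl fun j _ => ?_
    rw [dotProduct_smul, smul_eq_mul, dotProduct_comm]
    rw [hc]
    ring
  have hsx : s ⬝ᵥ x = ∑ j, c j ^ 2 := by
    rw [hs, sum_dot']
    refine Finset.sum_congr rfl fun j _ => ?_
    rw [smul_dotProduct, smul_eq_mul, hc]
    ring
  have hss : s ⬝ᵥ s = ∑ j, c j ^ 2 * (u j ⬝ᵥ u j) := by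
    rw [hs, sum_dot']
    refine Finset.sum_congr rfl fun j _ => ?_
    rw [smul_dotProduct, smul_eq_mul, dot_sum']
    have : ∑ k, u j ⬝ᵥ c k • u k = c j * (u j ⬝ᵥ u j) := by
      rw [Finset.sum_eq_single j]
      · rw [dotProduct_smul, smul_eq_mul]
      · intro k _ hk
        rw [dotProduct_smul, smul_eq_mul, hd j k (Ne.symm hk), mul_zero]
      · intro h; exact absurd (Finset.mem_univ j) h
    rw [this]; ring
  have hkey : 0 ≤ x ⬝ᵥ x - 2 * ∑ j, c j ^ 2 + ∑ j, c j ^ 2 * (u j ⬝ᵥ u j) := by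
    have h0 := dot_nonneg' (x - s)
    rw [sub_dotProduct, dotProduct_sub, dotProduct_sub, hxs, hsx, hss] at h0
    linarith
  have hle : ∑ j, c j ^ 2 * (u j ⬝ᵥ u j) ≤ ∑ j, c j ^ 2 := by
    refine Finset.sum_le_sum fun j _ => ?_
    calc c j ^ 2 * (u j ⬝ᵥ u j) ≤ c j ^ 2 * 1 := by
          refine mul_le_mul_of_nonneg_left (hn j) (sq_nonneg _)
      _ = c j ^ 2 := mul_one _
  calc ∑ j, (u j ⬝ᵥ x) ^ 2 = ∑ j, c j ^ 2 := rfl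
    _ ≤ x ⬝ᵥ x := by linarith

private lemma frobNorm_sq' {n m : ℕ} (A : Matrix (Fin n) (Fin m) ℝ) :
    frobNorm A ^ 2 = ∑ i, ∑ j, A i j ^ 2 := by
  rw [frobNorm, Real.sq_sqrt]
  positivity


private lemma col_bound' {n r : ℕ} (u : Fin n → Fin n → ℝ)
    (hd : ∀ i j, i ≠ j → u i ⬝ᵥ u j = 0) (hn : ∀ i, u i ⬝ᵥ u i ≤ 1)
    (X : Matrix (Fin n) (Fin r) ℝ) :
    ∑ j, (Xᵀ *ᵥ u j) ⬝ᵥ (Xᵀ *ᵥ u j) ≤ frobNorm X ^ 2 := by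
  rw [frobNorm_sq']
  have hL : ∀ j, (Xᵀ *ᵥ u j) ⬝ᵥ (Xᵀ *ᵥ u j) = ∑ c, (u j ⬝ᵥ fun i => X i c) ^ 2 := by
    intro j
    rw [dotProduct]
    refine Finset.sum_congr rfl fun c _ => ?_
    have h : (Xᵀ *ᵥ u j) c = u j ⬝ᵥ (fun i => X i c) := by
      simp [Matrix.mulVec, dotProduct, Matrix.transpose_apply, mul_comm]
    rw [h, sq]
  simp_rw [hL]
  rw [Finset.sum_comm, Finset.sum_comm (γ := Fin n) (f := fun i c => X i c ^ 2)]
  refine Finset.sum_le_sum fun c _ => ?_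
  calc ∑ j, (u j ⬝ᵥ fun i => X i c) ^ 2 ≤ (fun i => X i c) ⬝ᵥ (fun i => X i c) :=
        bessel' u hd hn _
    _ = ∑ i, X i c ^ 2 := by simp [dotProduct, sq]

/-- Variational characterization of the nuclear norm of a matrix of rank
at most `r`: `‖Z‖_* = min { (‖X‖_F² + ‖Y‖_F²)/2 : X Yᵀ = Z }`, and the minimum is
attained. -/
theorem nucNorm_eq_min_factorization (n r : ℕ) (hn : 0 < n) (hr : 0 < r)
    (Z : Matrix (Fin n) (Fin n) ℝ) (hrank : Z.rank ≤ r) :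
    ∃ X Y : Matrix (Fin n) (Fin r) ℝ, X * Yᵀ = Z ∧
      nucNorm Z = 1 / 2 * (frobNorm X ^ 2 + frobNorm Y ^ 2) ∧
      ∀ X' Y' : Matrix (Fin n) (Fin r) ℝ, X' * Y'ᵀ = Z →
        nucNorm Z ≤ 1 / 2 * (frobNorm X' ^ 2 + frobNorm Y' ^ 2) := by
  classical
  have hH : (Zᵀ * Z).IsHermitian := Matrix.isHermitian_conjTranspose_mul_self Z
  set μ : Fin n → ℝ := hH.eigenvalues with hμdef
  set v : Fin n → Fin n → ℝ := fun j => ⇑(hH.eigenvectorBasis j) with hvdef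
  have hμ0 : ∀ j, 0 ≤ μ j := fun j => by
    simpa using (Matrix.posSemidef_conjTranspose_mul_self Z).eigenvalues_nonneg j
  set σ : Fin n → ℝ := fun j => Real.sqrt (μ j) with hσdef
  have hσ0 : ∀ j, 0 ≤ σ j := fun j => Real.sqrt_nonneg _
  have hσsq : ∀ j, σ j ^ 2 = μ j := fun j => Real.sq_sqrt (hμ0 j)
  have hσzero : ∀ j, μ j = 0 → σ j = 0 := fun j h => by rw [hσdef]; simp [h]
  have hσpos : ∀ j, μ j ≠ 0 → σ j ≠ 0 := fun j h => by
    rw [hσdef]; exact (Real.sqrt_pos.mpr (lt_of_le_of_ne (hμ0 j) (Ne.symm h))).ne'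
  have hsing : ∀ j, singVal Z j = σ j := fun j => rfl
  have hvv : ∀ i j, v i ⬝ᵥ v j = if i = j then 1 else 0 := by
    intro i j
    have h := orthonormal_iff_ite.mp hH.eigenvectorBasis.orthonormal i j
    simpa [hvdef, PiLp.inner_apply, RCLike.inner_apply, dotProduct, mul_comm] using h
  have hmv : ∀ j, (Zᵀ * Z) *ᵥ v j = μ j • v j := fun j => hH.mulVec_eigenvectorBasis j
  have hZZ : ∀ i j, (Z *ᵥ v i) ⬝ᵥ (Z *ᵥ v j) = if i = j then μ j else 0 := by
    intro i j
    have h1 : v i ⬝ᵥ ((Zᵀ * Z) *ᵥ v j) = (Z *ᵥ v i) ⬝ᵥ (Z *ᵥ v j) := by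
      rw [← Matrix.mulVec_mulVec, Matrix.dotProduct_mulVec, Matrix.vecMul_transpose]
    rw [← h1, hmv j, dotProduct_smul, smul_eq_mul, hvv]
    simp [mul_ite]
  set u : Fin n → Fin n → ℝ := fun j => (σ j)⁻¹ • (Z *ᵥ v j) with hudef
  have hZv0 : ∀ j, μ j = 0 → Z *ᵥ v j = 0 := by
    intro j h
    rw [← dotProduct_self_eq_zero, hZZ j j]
    simp [h]
  have hZveq : ∀ j, Z *ᵥ v j = σ j • u j := by
    intro j
    by_cases h : μ j = 0
    · rw [hσzero j h, zero_smul]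
      exact hZv0 j h
    · rw [hudef]
      simp only
      rw [smul_smul, mul_inv_cancel₀ (hσpos j h), one_smul]
  have huu : ∀ i j, u i ⬝ᵥ u j = if i = j ∧ μ j ≠ 0 then 1 else 0 := by
    intro i j
    rw [hudef]
    simp only [smul_dotProduct, dotProduct_smul, smul_eq_mul, hZZ]
    by_cases hij : i = j
    · subst hij
      by_cases h : μ i = 0
      · simp [h]
      · rw [if_pos rfl, if_pos ⟨rfl, h⟩]
        rw [← hσsq i, sq]
        field_simp [hσpos i h]
    · simp [hij]
  have huZv : ∀ j, u j ⬝ᵥ (Z *ᵥ v j) = σ j := by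
    intro j
    rw [hudef]
    simp only
    rw [smul_dotProduct, smul_eq_mul, hZZ j j, if_pos rfl]
    by_cases h : μ j = 0
    · rw [h, mul_zero, hσzero j h]
    · rw [← hσsq j, sq, inv_mul_cancel_left₀ (hσpos j h)]
  have hVV : ∀ i m, (∑ j, v j i * v j m) = if i = m then 1 else 0 := by
    intro i m
    have h1 := Matrix.mem_unitaryGroup_iff.mp (Matrix.IsHermitian.eigenvectorUnitary hH).2
    have h2 := congrFun (congrFun h1 i) m
    simpa [Matrix.mul_apply, Matrix.one_apply, Matrix.IsHermitian.eigenvectorUnitary_apply,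
      Matrix.star_apply, hvdef] using h2
  have hdecomp : ∀ i m, Z i m = ∑ j, σ j * (u j i * v j m) := by
    intro i m
    have h1 : ∑ j, (Z *ᵥ v j) i * v j m = Z i m := by
      simp only [Matrix.mulVec, dotProduct, Finset.sum_mul, mul_assoc]
      rw [Finset.sum_comm]
      simp only [← Finset.mul_sum]
      simp [hVV]
    rw [← h1]
    refine Finset.sum_congr rfl fun j _ => ?_
    rw [hZveq j]
    simp [mul_assoc]
  have hsplit : ∀ f : Fin n → ℝ, (∀ j, μ j = 0 → f j = 0) →
      ∑ j, f j = ∑ j : {j // μ j ≠ 0}, f j.1 := by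
    intro f hf
    rw [← Finset.sum_subtype (Finset.univ.filter fun j => μ j ≠ 0) (by simp) f]
    refine (Finset.sum_filter_of_ne fun j _ h => ?_).symm
    intro h0
    exact h (hf j h0)
  have hcard : Fintype.card {j // μ j ≠ 0} ≤ r := by
    have h1 := hH.rank_eq_card_non_zero_eigs
    have h2 := Matrix.rank_transpose_mul_self Z
    rw [h2] at h1
    rw [hμdef]
    calc Fintype.card {j // hH.eigenvalues j ≠ 0} = Z.rank := h1.symm
      _ ≤ r := hrank
  obtain ⟨e⟩ : Nonempty ({j // μ j ≠ 0} ↪ Fin r) := by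
    apply Function.Embedding.nonempty_of_card_le
    simpa using hcard
  have key : ∀ (a b : {j // μ j ≠ 0} → Fin n → ℝ) (i m : Fin n),
      (∑ k : Fin r, (∑ j, if e j = k then a j i else 0) *
        (∑ j, if e j = k then b j m else 0)) = ∑ j, a j i * b j m := by
    intro a b i m
    have h1 : ∀ (j j' : {j // μ j ≠ 0}),
        (∑ k : Fin r, (if e j = k then a j i else 0) * (if e j' = k then b j' m else 0))
          = if j' = j then a j i * b j m else 0 := by
      intro j j'
      by_cases h : j' = j
      · subst h
        simp [ite_zero_mul_ite_zero]
      · rw [if_neg h]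
        refine Finset.sum_eq_zero fun k _ => ?_
        rw [ite_zero_mul_ite_zero, if_neg]
        rintro ⟨rfl, hk⟩
        exact h (e.injective hk)
    calc (∑ k : Fin r, (∑ j, if e j = k then a j i else 0) *
          (∑ j, if e j = k then b j m else 0))
        = ∑ k : Fin r, ∑ j, ∑ j',
            (if e j = k then a j i else 0) * (if e j' = k then b j' m else 0) := by
          simp_rw [Finset.sum_mul, Finset.mul_sum]
      _ = ∑ j, ∑ j', ∑ k : Fin r,
            (if e j = k then a j i else 0) * (if e j' = k then b j' m else 0) := by
          rw [Finset.sum_comm]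
          exact Finset.sum_congr rfl fun j _ => Finset.sum_comm
      _ = ∑ j, ∑ j', if j' = j then a j i * b j m else 0 :=
          Finset.sum_congr rfl fun j _ => Finset.sum_congr rfl fun j' _ => h1 j j'
      _ = ∑ j, a j i * b j m := by simp
  refine ⟨fun i k => ∑ j : {j // μ j ≠ 0}, if e j = k then Real.sqrt (σ j.1) * u j.1 i else 0,
          fun i k => ∑ j : {j // μ j ≠ 0}, if e j = k then Real.sqrt (σ j.1) * v j.1 i else 0,
          ?_, ?_, ?_⟩
  · ext i m
    erw [Matrix.mul_apply]
    show (∑ k : Fin r, (∑ j : {j // μ j ≠ 0}, if e j = k then Real.sqrt (σ j.1) * u j.1 i else 0) *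
      (∑ j : {j // μ j ≠ 0}, if e j = k then Real.sqrt (σ j.1) * v j.1 m else 0)) = Z i m
    rw [key (fun j i => Real.sqrt (σ j.1) * u j.1 i) (fun j i => Real.sqrt (σ j.1) * v j.1 i) i m]
    rw [hdecomp i m, hsplit (fun j => σ j * (u j i * v j m))
      (fun j h => by show σ j * (u j i * v j m) = 0; rw [hσzero j h, zero_mul])]
    refine Finset.sum_congr rfl fun j _ => ?_
    have hss : Real.sqrt (σ j.1) * Real.sqrt (σ j.1) = σ j.1 := Real.mul_self_sqrt (hσ0 j.1)
    calc (Real.sqrt (σ j.1) * u j.1 i) * (Real.sqrt (σ j.1) * v j.1 m)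
        = (Real.sqrt (σ j.1) * Real.sqrt (σ j.1)) * (u j.1 i * v j.1 m) := by ring
      _ = σ j.1 * (u j.1 i * v j.1 m) := by rw [hss]
  · have hgen : ∀ (w : Fin n → Fin n → ℝ), (∀ j : {j // μ j ≠ 0}, w j.1 ⬝ᵥ w j.1 = 1) →
        frobNorm (Matrix.of fun i k =>
          ∑ j : {j // μ j ≠ 0}, if e j = k then Real.sqrt (σ j.1) * w j.1 i else 0) ^ 2
          = ∑ j : {j // μ j ≠ 0}, σ j.1 := by
      intro w hw
      rw [frobNorm_sq']
      have h1 : ∀ i, (∑ k, (Matrix.of fun i k =>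
          ∑ j : {j // μ j ≠ 0}, if e j = k then Real.sqrt (σ j.1) * w j.1 i else 0) i k ^ 2)
            = ∑ j : {j // μ j ≠ 0}, (Real.sqrt (σ j.1) * w j.1 i) * (Real.sqrt (σ j.1) * w j.1 i) := by
        intro i
        simp_rw [sq]
        exact key (fun j i => Real.sqrt (σ j.1) * w j.1 i) (fun j i => Real.sqrt (σ j.1) * w j.1 i) i i
      simp_rw [h1]
      rw [Finset.sum_comm]
      refine Finset.sum_congr rfl fun j _ => ?_
      have hss : Real.sqrt (σ j.1) * Real.sqrt (σ j.1) = σ j.1 := Real.mul_self_sqrt (hσ0 j.1)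
      calc ∑ i, (Real.sqrt (σ j.1) * w j.1 i) * (Real.sqrt (σ j.1) * w j.1 i)
          = σ j.1 * ∑ i, w j.1 i * w j.1 i := by
            rw [Finset.mul_sum]
            refine Finset.sum_congr rfl fun i _ => ?_
            rw [mul_mul_mul_comm, hss]
        _ = σ j.1 * (w j.1 ⬝ᵥ w j.1) := rfl
        _ = σ j.1 := by rw [hw j, mul_one]
    have hfX := hgen u (fun j => by rw [huu]; simp [j.2])
    have hfY := hgen v (fun j => by rw [hvv]; simp)
    have hnuc : nucNorm Z = ∑ j : {j // μ j ≠ 0}, σ j.1 := by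
      calc nucNorm Z = ∑ j, σ j := Finset.sum_congr rfl fun j _ => hsing j
        _ = _ := hsplit σ (fun j h => hσzero j h)
    rw [hnuc, show (fun i k => ∑ j : {j // μ j ≠ 0}, if e j = k then Real.sqrt (σ j.1) * u j.1 i else 0)
      = Matrix.of fun i k => ∑ j : {j // μ j ≠ 0}, if e j = k then Real.sqrt (σ j.1) * u j.1 i else 0 from rfl,
      show (fun i k => ∑ j : {j // μ j ≠ 0}, if e j = k then Real.sqrt (σ j.1) * v j.1 i else 0)
      = Matrix.of fun i k => ∑ j : {j // μ j ≠ 0}, if e j = k then Real.sqrt (σ j.1) * v j.1 i else 0 from rfl,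
      hfX, hfY]
    ring
  · intro X' Y' hXY'
    have h1 : ∀ j, σ j = (X'ᵀ *ᵥ u j) ⬝ᵥ (Y'ᵀ *ᵥ v j) := by
      intro j
      rw [← huZv j]
      conv_lhs => rw [← hXY']
      rw [← Matrix.mulVec_mulVec, Matrix.dotProduct_mulVec, Matrix.mulVec_transpose,
        Matrix.mulVec_transpose]
    have h2 : ∀ (a b : Fin r → ℝ), a ⬝ᵥ b ≤ 1/2 * (a ⬝ᵥ a + b ⬝ᵥ b) := by
      intro a b
      have h0 := dot_nonneg' (a - b)
      rw [sub_dotProduct, dotProduct_sub, dotProduct_sub] at h0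
      have hc := dotProduct_comm a b
      linarith
    have hu_d : ∀ i j, i ≠ j → u i ⬝ᵥ u j = 0 := fun i j hij => by rw [huu]; simp [hij]
    have hu_n : ∀ i, u i ⬝ᵥ u i ≤ 1 := fun i => by rw [huu]; split <;> norm_num
    have hv_d : ∀ i j, i ≠ j → v i ⬝ᵥ v j = 0 := fun i j hij => by rw [hvv]; simp [hij]
    have hv_n : ∀ i, v i ⬝ᵥ v i ≤ 1 := fun i => by rw [hvv]; simp
    have hbX := col_bound' u hu_d hu_n X'
    have hbY := col_bound' v hv_d hv_n Y'
    calc nucNorm Z = ∑ j, σ j := Finset.sum_congr rfl fun j _ => hsing j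
      _ = ∑ j, (X'ᵀ *ᵥ u j) ⬝ᵥ (Y'ᵀ *ᵥ v j) := Finset.sum_congr rfl fun j _ => h1 j
      _ ≤ ∑ j, 1/2 * ((X'ᵀ *ᵥ u j) ⬝ᵥ (X'ᵀ *ᵥ u j) + (Y'ᵀ *ᵥ v j) ⬝ᵥ (Y'ᵀ *ᵥ v j)) :=
          Finset.sum_le_sum fun j _ => by exact h2 _ _
      _ = 1/2 * ((∑ j, (X'ᵀ *ᵥ u j) ⬝ᵥ (X'ᵀ *ᵥ u j)) + ∑ j, (Y'ᵀ *ᵥ v j) ⬝ᵥ (Y'ᵀ *ᵥ v j)) := by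
          rw [← Finset.mul_sum, Finset.sum_add_distrib]
      _ ≤ 1/2 * (frobNorm X' ^ 2 + frobNorm Y' ^ 2) := by linarith
end
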